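/- Let η = (η₁, η₂) ∈ ℝ² with η ≠ 0 and write r = |η|. Suppose a = (a₁,a₂,a₃), b = (b₁,b₂,b₃) ∈ ℂ³ and a₀ ∈ ℂ satisfy: (i) 2r b₁ + i η₁ b₃ = 0 and 2r b₂ + i η₂ b₃ = 0; (ii) b₃ = i(η₁ b₁ + η₂ b₂)/r; (iii) a₁ = a₂ = 0 and a₃ = a₀/(4r³); and (iv) a₃ = (i η₁ a₁ + i η₂ a₂ + b₃)/r. Then a = 0, b = 0, and a₀ = 0. -/

import Mathlib

/-- Let `η ∈ ℝ²` be nonzero, `r = |η|`, `a, b ∈ ℂ³`, `a₀ ∈ ℂ`.  If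
(i) `2rb₁ + iη₁b₃ = 0` and `2rb₂ + iη₂b₃ = 0`,
(ii) `b₃ = i(η₁b₁ + η₂b₂)/r`,
(iii) `a₁ = a₂ = 0` and `a₃ = a₀/(4r³)`, and
(iv) `a₃ = (iη₁a₁ + iη₂a₂ + b₃)/r`,
then `a = 0`, `b = 0`, and `a₀ = 0` (indices 0-based). -/
theorem stmt17 (η : EuclideanSpace ℝ (Fin 2)) (hη : η ≠ 0)
    (a b : Fin 3 → ℂ) (a₀ : ℂ)
    (h1a : 2 * (‖η‖ : ℂ) * b 0 + Complex.I * (η 0 : ℂ) * b 2 = 0)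
    (h1b : 2 * (‖η‖ : ℂ) * b 1 + Complex.I * (η 1 : ℂ) * b 2 = 0)
    (h2 : b 2 = Complex.I * ((η 0 : ℂ) * b 0 + (η 1 : ℂ) * b 1) / (‖η‖ : ℂ))
    (h3a : a 0 = 0) (h3b : a 1 = 0) (h3c : a 2 = a₀ / (4 * (‖η‖ : ℂ)^3))
    (h4 : a 2 = (Complex.I * (η 0 : ℂ) * a 0 + Complex.I * (η 1 : ℂ) * a 1 + b 2) / (‖η‖ : ℂ)) :
    a = 0 ∧ b = 0 ∧ a₀ = 0 := by
  have hr : (‖η‖ : ℝ) ≠ 0 := norm_ne_zero_iff.mpr hη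
  have hrc : (‖η‖ : ℂ) ≠ 0 := by exact_mod_cast hr
  have hnr : ‖η‖ ^ 2 = (η 0) ^ 2 + (η 1) ^ 2 := by
    rw [EuclideanSpace.norm_eq, Real.sq_sqrt (by positivity)]
    simp [Fin.sum_univ_two, sq, Real.norm_eq_abs, abs_mul_abs_self]
  have hc2 : ((η 0 : ℂ))^2 + (η 1 : ℂ)^2 = (‖η‖ : ℂ)^2 := by
    exact_mod_cast hnr.symm
  have h2' : b 2 * (‖η‖ : ℂ) = Complex.I * ((η 0 : ℂ) * b 0 + (η 1 : ℂ) * b 1) := by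
    rw [h2]; field_simp
  have key : (‖η‖ : ℂ)^2 * b 2 = 0 := by
    linear_combination 2*(‖η‖:ℂ)*h2' + Complex.I*(η 0 : ℂ)*h1a + Complex.I*(η 1 : ℂ)*h1b + (b 2)*hc2 + (-(b 2)*((η 0 : ℂ)^2+(η 1 : ℂ)^2))*Complex.I_sq
  have hb2 : b 2 = 0 := by
    have := mul_eq_zero.mp key
    rcases this with h | h
    · exact absurd h (pow_ne_zero 2 hrc)
    · exact h
  have hb0 : b 0 = 0 := by
    have : 2 * (‖η‖ : ℂ) * b 0 = 0 := by rw [hb2] at h1a; linear_combination h1a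
    simpa [hrc] using this
  have hb1 : b 1 = 0 := by
    have : 2 * (‖η‖ : ℂ) * b 1 = 0 := by rw [hb2] at h1b; linear_combination h1b
    simpa [hrc] using this
  have ha2 : a 2 = 0 := by
    rw [h3a, h3b, hb2] at h4; simpa using h4
  have ha0 : a₀ = 0 := by
    rw [ha2] at h3c
    field_simp at h3c
    simpa using h3c.symm
  refine ⟨?_, ?_, ha0⟩
  · funext i; fin_cases i <;> simp [h3a, h3b, ha2]
  · funext i; fin_cases i <;> simp [hb0, hb1, hb2]
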